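/- arXiv:math/0702612 — 8 statements merged into one kernel-verified Lean document; each statement's English description precedes it below -/
import Mathlib

section
/- Let g be a finite-dimensional real Lie algebra with a biinvariant inner product Q, let L ⊆ g be a linear subspace, and set L₁ := [L, g]. Then [L, L₁] = L₁. -/
/-- The span of all brackets `⁅a, b⁆` with `a ∈ A`, `b ∈ B`. -/
def bracketSpan {g : Type*} [LieRing g] [LieAlgebra ℝ g]
    (A B : Submodule ℝ g) : Submodule ℝ g :=
  Submodule.span ℝ {z | ∃ a ∈ A, ∃ b ∈ B, z = ⁅a, b⁆}

/-- Let `g` be a finite-dimensional real Lie algebra with a biinvariant inner product `Q`,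
`L ⊆ g` a linear subspace and `L₁ := [L, g]`.  Then `[L, L₁] = L₁`. -/
theorem bracket_L_L1_eq_L1
    (g : Type*) [LieRing g] [LieAlgebra ℝ g] [FiniteDimensional ℝ g]
    (Q : LinearMap.BilinForm ℝ g)
    (hsymm : ∀ x y : g, Q x y = Q y x)
    (hpos : ∀ x : g, x ≠ 0 → 0 < Q x x)
    (hbi : ∀ z x y : g, Q ⁅z, x⁆ y + Q x ⁅z, y⁆ = 0)
    (L : Submodule ℝ g) :
    bracketSpan L (bracketSpan L ⊤) = bracketSpan L ⊤ := by
  set L₁ : Submodule ℝ g := bracketSpan L ⊤ with hL₁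
  set M : Submodule ℝ g := bracketSpan L L₁ with hM
  -- membership of generators
  have hgen : ∀ (A B : Submodule ℝ g) {a b : g}, a ∈ A → b ∈ B →
      ⁅a, b⁆ ∈ bracketSpan A B := fun A B a b ha hb =>
    Submodule.subset_span ⟨_, ha, _, hb, rfl⟩
  -- easy inclusion
  have hML : M ≤ L₁ := by
    rw [hM, bracketSpan, Submodule.span_le]
    rintro z ⟨a, ha, b, _, rfl⟩
    exact hgen L ⊤ ha trivial
  have hrefl : Q.IsRefl := fun x y h => by rw [hsymm]; exact h
  have hzero : ∀ x : g, Q x x = 0 → x = 0 := by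
    intro x hx
    by_contra hne
    exact (hpos x hne).ne' hx
  -- Q restricted to M is nondegenerate
  have hnd : (Q.restrict M).Nondegenerate := by
    constructor
    all_goals
      rintro ⟨x, hx⟩ h
      have : Q x x = 0 := h ⟨x, hx⟩
      exact Subtype.ext (hzero x this)
  have hcompl := Q.isCompl_orthogonal_of_restrict_nondegenerate hrefl hnd
  -- now show L₁ ≤ M
  refine le_antisymm hML ?_
  intro x hx
  obtain ⟨m, hm, p, hp, rfl⟩ : ∃ m ∈ M, ∃ p ∈ Q.orthogonal M, m + p = x := by
    have := hcompl.sup_eq_top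
    have hx' : x ∈ M ⊔ Q.orthogonal M := this ▸ Submodule.mem_top
    exact Submodule.mem_sup.mp hx'
  -- p ∈ L₁ and p ⊥ M; show p = 0
  have hpL₁ : p ∈ L₁ := by
    have : (m + p) - m ∈ L₁ := Submodule.sub_mem _ hx (hML hm)
    simpa using this
  -- p orthogonal to all of M: ∀ n ∈ M, Q n p = 0
  have hporth : ∀ n ∈ M, Q n p = 0 :=
    fun n hn => (LinearMap.BilinForm.mem_orthogonal_iff.mp hp) n hn
  -- for a ∈ L, ⁅a, p⁆ = 0
  have hbr : ∀ a ∈ L, ⁅a, p⁆ = 0 := by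
    intro a ha
    have h1 : ∀ b ∈ L₁, Q ⁅a, p⁆ b = 0 := by
      intro b hb
      have h2 : Q ⁅a, b⁆ p = 0 := hporth _ (hgen L L₁ ha hb)
      have h3 : Q p ⁅a, b⁆ = 0 := by rw [hsymm]; exact h2
      have := hbi a p b
      linarith
    have hap : ⁅a, p⁆ ∈ L₁ := hgen L ⊤ ha trivial
    exact hzero _ (h1 _ hap)
  -- hence Q p z = 0 for all z ∈ L₁
  have hpL₁orth : ∀ z ∈ L₁, Q p z = 0 := by
    intro z hz
    have hker : L₁ ≤ LinearMap.ker (Q p) := by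
      rw [hL₁, bracketSpan, Submodule.span_le]
      rintro w ⟨a, ha, b, _, rfl⟩
      have := hbi a p b
      have h0 : Q ⁅a, p⁆ b = 0 := by rw [hbr a ha]; simp
      simp only [SetLike.mem_coe, LinearMap.mem_ker]
      linarith
    exact hker hz
  have hp0 : p = 0 := hzero p (hpL₁orth p hpL₁)
  rw [hp0, add_zero]
  exact hm
end

section
/- Let g be a finite-dimensional real Lie algebra with a biinvariant inner product Q, let L ⊆ g be a linear subspace, and set L₁ := [L, g] and I := span(L ∪ L₁ ∪ [L₁, L₁]). Then [I⊥, L] = 0, where I⊥ is the orthogonal complement of I with respect to Q. -/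
/-- Let `g` be a finite-dimensional real Lie algebra with a biinvariant inner product `Q`,
`L ⊆ g` a linear subspace, `L₁ := [L, g]` and `I := span(L ∪ L₁ ∪ [L₁, L₁])`.
Then `[I⊥, L] = 0`, where `I⊥` is the `Q`-orthogonal complement of `I`. -/
theorem bracket_orthogonal_ideal_L_eq_bot
    (g : Type*) [LieRing g] [LieAlgebra ℝ g] [FiniteDimensional ℝ g]
    (Q : LinearMap.BilinForm ℝ g)
    (hsymm : ∀ x y : g, Q x y = Q y x)
    (hpos : ∀ x : g, x ≠ 0 → 0 < Q x x)
    (hbi : ∀ z x y : g, Q ⁅z, x⁆ y + Q x ⁅z, y⁆ = 0)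
    (L L₁ I : Submodule ℝ g)
    (hL₁ : L₁ = bracketSpan L ⊤)
    (hI : I = L ⊔ L₁ ⊔ bracketSpan L₁ L₁) :
    bracketSpan (Q.orthogonal I) L = ⊥ := by
  have hL₁I : L₁ ≤ I := by
    rw [hI]; exact le_sup_of_le_left le_sup_right
  rw [eq_bot_iff, bracketSpan, Submodule.span_le]
  rintro z ⟨x, hx, l, hl, rfl⟩
  have key : ⁅x, l⁆ = 0 := by
    by_contra hne
    have hpos' := hpos _ hne
    set v := ⁅x, l⁆ with hv
    have hmem : ⁅l, v⁆ ∈ I := by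
      apply hL₁I
      rw [hL₁]
      exact Submodule.subset_span ⟨l, hl, v, trivial, rfl⟩
    have h0 : Q ⁅l, v⁆ x = 0 := hx _ hmem
    have h1 := hbi l x v
    have h2 : ⁅l, x⁆ = -v := by rw [hv, ← lie_skew]
    rw [h2, map_neg, LinearMap.neg_apply, neg_add_eq_zero] at h1
    rw [hsymm] at h0
    rw [h1, h0] at hpos'
    exact lt_irrefl 0 hpos'
  simp [key]
end

section
/- Let g be a finite-dimensional real Lie algebra with a biinvariant inner product Q, let L ⊆ g be a linear subspace, and set L₁ := [L, g]. Then the linear span I of L, L₁, and [L₁, L₁] is an ideal of g, and I is the smallest ideal of g containing L. -/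
/-- Let `g` be a finite-dimensional real Lie algebra with a biinvariant inner product `Q`,
`L ⊆ g` a linear subspace and `L₁ := [L, g]`.  Then the linear span `I` of `L`, `L₁` and
`[L₁, L₁]` is an ideal of `g`, and `I` is the smallest ideal of `g` containing `L`. -/
theorem span_L_L1_bracket_is_smallest_ideal
    (g : Type*) [LieRing g] [LieAlgebra ℝ g] [FiniteDimensional ℝ g]
    (Q : LinearMap.BilinForm ℝ g)
    (hsymm : ∀ x y : g, Q x y = Q y x)
    (hpos : ∀ x : g, x ≠ 0 → 0 < Q x x)
    (hbi : ∀ z x y : g, Q ⁅z, x⁆ y + Q x ⁅z, y⁆ = 0)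
    (L L₁ I : Submodule ℝ g)
    (hL₁ : L₁ = bracketSpan L ⊤)
    (hI : I = L ⊔ L₁ ⊔ bracketSpan L₁ L₁) :
    (∀ x : g, ∀ y ∈ I, ⁅x, y⁆ ∈ I) ∧
      (∀ J : LieIdeal ℝ g, L ≤ J.toSubmodule → I ≤ J.toSubmodule) := by
  classical
  -- generators of L₁
  have hgen : ∀ a ∈ L, ∀ y : g, ⁅a, y⁆ ∈ L₁ := by
    intro a ha y
    rw [hL₁]
    exact Submodule.subset_span ⟨a, ha, y, Submodule.mem_top, rfl⟩
  have hgen2 : ∀ u ∈ L₁, ∀ v ∈ L₁, ⁅u, v⁆ ∈ bracketSpan L₁ L₁ :=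
    fun u hu v hv => Submodule.subset_span ⟨u, hu, v, hv, rfl⟩
  -- basic facts about Q
  have hrefl : Q.IsRefl := fun x y h => by rw [hsymm]; exact h
  have hQzero : ∀ x : g, (∀ y : g, Q x y = 0) → x = 0 := by
    intro x hx
    by_contra h
    exact ne_of_gt (hpos x h) (hx x)
  have hnd : ((Q.restrict L₁)).Nondegenerate := by
    refine (LinearMap.IsRefl.nondegenerate_iff_separatingLeft (B := Q.restrict L₁)
      (fun x y h => hrefl (x : g) (y : g) h)).2 ?_
    rintro ⟨x, hx⟩ h
    have hxx : Q x x = 0 := h ⟨x, hx⟩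
    have : x = 0 := by
      by_contra hne
      exact ne_of_gt (hpos x hne) hxx
    exact Subtype.ext this
  have hcompl : IsCompl L₁ (Q.orthogonal L₁) :=
    Q.isCompl_orthogonal_of_restrict_nondegenerate hrefl hnd
  -- decomposition
  have hdecomp : ∀ x : g, ∃ v ∈ L₁, ∃ w ∈ Q.orthogonal L₁, x = v + w := by
    intro x
    have : x ∈ L₁ ⊔ Q.orthogonal L₁ := by rw [hcompl.sup_eq_top]; trivial
    obtain ⟨v, hv, w, hw, hvw⟩ := Submodule.mem_sup.1 this
    exact ⟨v, hv, w, hw, hvw.symm⟩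
  -- Key lemma A : brackets of L with orthogonal of L₁ vanish
  have hA : ∀ a ∈ L, ∀ w ∈ Q.orthogonal L₁, ⁅a, w⁆ = 0 := by
    intro a ha w hw
    apply hQzero
    intro y
    have h1 := hbi a w y
    have h2 : Q w ⁅a, y⁆ = 0 := by
      rw [hsymm]
      exact (LinearMap.BilinForm.mem_orthogonal_iff.1 hw) ⁅a, y⁆ (hgen a ha y)
    linarith [h1, h2]
  -- brackets of L₁ with orthogonal of L₁ lie in L₁
  have hB0 : ∀ u ∈ L₁, ∀ w ∈ Q.orthogonal L₁, ⁅u, w⁆ ∈ L₁ := by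
    intro u hu w hw
    rw [hL₁] at hu
    induction hu using Submodule.span_induction with
    | mem z hz =>
        obtain ⟨a, ha, y, -, rfl⟩ := hz
        have : ⁅(⁅a, y⁆ : g), w⁆ = ⁅a, ⁅y, w⁆⁆ - ⁅y, ⁅a, w⁆⁆ := by
          rw [lie_lie]
        rw [this, hA a ha w hw, lie_zero, sub_zero]
        exact hgen a ha ⁅y, w⁆
    | zero => simp only [zero_lie, lie_zero]; exact L₁.zero_mem
    | add p q hp hq hp' hq' => rw [add_lie]; exact L₁.add_mem hp' hq'
    | smul c p hp hp' => rw [smul_lie]; exact L₁.smul_mem c hp'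
  -- Key lemma B : [L₁, g] ⊆ M := L₁ ⊔ [L₁, L₁]
  set M : Submodule ℝ g := L₁ ⊔ bracketSpan L₁ L₁ with hM
  have hL₁M : L₁ ≤ M := le_sup_left
  have hBSM : bracketSpan L₁ L₁ ≤ M := le_sup_right
  have hB : ∀ u ∈ L₁, ∀ x : g, ⁅u, x⁆ ∈ M := by
    intro u hu x
    obtain ⟨v, hv, w, hw, rfl⟩ := hdecomp x
    rw [lie_add]
    exact M.add_mem (hBSM (hgen2 u hu v hv)) (hL₁M (hB0 u hu w hw))
  have hB' : ∀ x : g, ∀ u ∈ L₁, ⁅x, u⁆ ∈ M := by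
    intro x u hu
    rw [← lie_skew]
    exact M.neg_mem (hB u hu x)
  -- M is an ideal
  have hMideal : ∀ x : g, ∀ m ∈ M, ⁅x, m⁆ ∈ M := by
    intro x m hm
    obtain ⟨p, hp, q, hq, rfl⟩ := Submodule.mem_sup.1 hm
    rw [lie_add]
    refine M.add_mem (hB' x p hp) ?_
    clear hm hp p
    induction hq using Submodule.span_induction with
    | mem z hz =>
        obtain ⟨u, hu, v, hv, rfl⟩ := hz
        rw [leibniz_lie]
        refine M.add_mem ?_ (hB u hu ⁅x, v⁆)
        rw [← lie_skew]
        exact M.neg_mem (hB v hv ⁅x, u⁆)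
    | zero => simp only [zero_lie, lie_zero]; exact M.zero_mem
    | add p q hp hq hp' hq' => rw [lie_add]; exact M.add_mem hp' hq'
    | smul c p hp hp' => rw [lie_smul]; exact M.smul_mem c hp'
  -- I = L ⊔ M
  have hIM : I = L ⊔ M := by rw [hI, hM, sup_assoc]
  constructor
  · intro x y hy
    rw [hIM] at hy ⊢
    obtain ⟨l, hl, m, hm, rfl⟩ := Submodule.mem_sup.1 hy
    rw [lie_add]
    refine Submodule.add_mem _ ?_ (Submodule.mem_sup_right (hMideal x m hm))
    refine Submodule.mem_sup_right (hL₁M ?_)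
    rw [← lie_skew]
    exact L₁.neg_mem (hgen l hl x)
  · intro J hJ
    rw [hI]
    have hL₁J : L₁ ≤ J.toSubmodule := by
      rw [hL₁, bracketSpan, Submodule.span_le]
      rintro z ⟨a, ha, y, -, rfl⟩
      rw [← lie_skew]
      exact neg_mem (J.lie_mem (hJ ha))
    refine sup_le (sup_le hJ hL₁J) ?_
    rw [bracketSpan, Submodule.span_le]
    rintro z ⟨u, hu, v, hv, rfl⟩
    exact J.lie_mem (hL₁J hv)
end

section
/- Let g be a finite-dimensional real Lie algebra with a biinvariant inner product Q, let s ⊊ g be a proper subalgebra, and let l₁, l₂ ⊆ s be subalgebras such that (ad_y ∘ ad_x)|_{s⊥} = 0 for all x ∈ l₁, y ∈ l₂. Suppose W ⊆ s⊥ is an ad_s-invariant subspace with [l₁, W] = W. Then [l₂, W] = 0 and moreover [l₂, [W, g]] = 0. -/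
/-- Let `g` be a finite-dimensional real Lie algebra with a biinvariant inner product `Q`,
`s ⊊ g` a proper subalgebra, `l₁, l₂ ⊆ s` subalgebras with `(ad_y ∘ ad_x)|_{s⊥} = 0`
for all `x ∈ l₁`, `y ∈ l₂`, and `W ⊆ s⊥` an `ad_s`-invariant subspace with `[l₁, W] = W`.
Then `[l₂, W] = 0` and `[l₂, [W, g]] = 0`. -/
theorem bracket_l2_W_and_bracket_l2_W_g_eq_bot
    (g : Type*) [LieRing g] [LieAlgebra ℝ g] [FiniteDimensional ℝ g]
    (Q : LinearMap.BilinForm ℝ g)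
    (hsymm : ∀ x y : g, Q x y = Q y x)
    (hpos : ∀ x : g, x ≠ 0 → 0 < Q x x)
    (hbi : ∀ z x y : g, Q ⁅z, x⁆ y + Q x ⁅z, y⁆ = 0)
    (s l₁ l₂ W : Submodule ℝ g)
    (hproper : s ≠ ⊤)
    (hs : ∀ x ∈ s, ∀ y ∈ s, ⁅x, y⁆ ∈ s)
    (hl₁s : l₁ ≤ s) (hl₂s : l₂ ≤ s)
    (hl₁ : ∀ x ∈ l₁, ∀ y ∈ l₁, ⁅x, y⁆ ∈ l₁)
    (hl₂ : ∀ x ∈ l₂, ∀ y ∈ l₂, ⁅x, y⁆ ∈ l₂)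
    (hvanish : ∀ x ∈ l₁, ∀ y ∈ l₂, ∀ v ∈ Q.orthogonal s, ⁅y, ⁅x, v⁆⁆ = 0)
    (hWperp : W ≤ Q.orthogonal s)
    (hWinv : ∀ x ∈ s, ∀ w ∈ W, ⁅x, w⁆ ∈ W)
    (hl₁W : bracketSpan l₁ W = W) :
    bracketSpan l₂ W = ⊥ ∧ bracketSpan l₂ (bracketSpan W ⊤) = ⊥ := by
  -- basic consequences of positive definiteness
  have hQzero : ∀ z : g, Q z z = 0 → z = 0 := by
    intro z hz
    by_contra h
    exact absurd hz (ne_of_gt (hpos z h))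
  have hrefl : Q.IsRefl := fun x y h => by rw [hsymm]; exact h
  -- `s` and its orthogonal complement are complementary
  have hnd : (Q.restrict s).Nondegenerate := by
    constructor <;>
    · intro x hx
      have := hx x
      rw [LinearMap.BilinForm.restrict_apply] at this
      exact Subtype.ext (hQzero _ this)
  have hcompl : IsCompl s (Q.orthogonal s) :=
    Q.isCompl_orthogonal_of_restrict_nondegenerate hrefl hnd
  -- part 1, pointwise: `⁅y, w⁆ = 0` for `y ∈ l₂`, `w ∈ W`
  have part1 : ∀ y ∈ l₂, ∀ w ∈ W, ⁅y, w⁆ = 0 := by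
    intro y hy w hw
    rw [← hl₁W] at hw
    have hker : bracketSpan l₁ W ≤ LinearMap.ker (LieAlgebra.ad ℝ g y) := by
      apply Submodule.span_le.2
      rintro z ⟨x, hx, v, hv, rfl⟩
      simp only [SetLike.mem_coe, LinearMap.mem_ker, LieAlgebra.ad_apply]
      exact hvanish x hx y hy v (hWperp hv)
    have := hker hw
    rwa [LinearMap.mem_ker, LieAlgebra.ad_apply] at this
  -- `⁅w, t⁆ = 0` for `w ∈ W`, `y ∈ l₂`, `t = ⁅y, n⁆` with `n ∈ s`
  have hwys : ∀ y ∈ l₂, ∀ w ∈ W, ∀ n ∈ s, ⁅w, ⁅y, n⁆⁆ = 0 := by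
    intro y hy w hw n hn
    have h1 : ⁅w, y⁆ = 0 := by rw [← lie_skew, part1 y hy w hw, neg_zero]
    have h2 : ⁅w, n⁆ ∈ W := by
      rw [← lie_skew]
      exact W.neg_mem (hWinv n hn w hw)
    rw [leibniz_lie, h1, zero_lie, zero_add, part1 y hy _ h2]
  -- key orthogonality: `⁅y, ⁅w, u⁆⁆ ∈ s⊥`
  have hperp : ∀ y ∈ l₂, ∀ w ∈ W, ∀ u : g, ⁅y, ⁅w, u⁆⁆ ∈ Q.orthogonal s := by
    intro y hy w hw u n hn
    have e1 : Q ⁅y, ⁅w, u⁆⁆ n = -Q ⁅w, u⁆ ⁅y, n⁆ :=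
      eq_neg_of_add_eq_zero_left (hbi y ⁅w, u⁆ n)
    have e2 : Q ⁅w, u⁆ ⁅y, n⁆ = -Q u ⁅w, ⁅y, n⁆⁆ :=
      eq_neg_of_add_eq_zero_left (hbi w u ⁅y, n⁆)
    show Q n ⁅y, ⁅w, u⁆⁆ = 0
    rw [hsymm, e1, e2, hwys y hy w hw n hn]
    simp
  -- the key claim: `⁅y, ⁅w, u⁆⁆ = 0`
  have keyA : ∀ y ∈ l₂, ∀ w ∈ W, ∀ u : g, ⁅y, ⁅w, u⁆⁆ = 0 := by
    intro y hy w hw u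
    -- decompose u = a + b with a ∈ s, b ∈ s⊥
    have hu : u ∈ s ⊔ Q.orthogonal s := by
      rw [hcompl.sup_eq_top]; trivial
    obtain ⟨a, ha, b, hb, rfl⟩ := Submodule.mem_sup.1 hu
    have hcase_s : ∀ w' ∈ W, ⁅y, ⁅w', a⁆⁆ = 0 := by
      intro w' hw'
      have : ⁅w', a⁆ ∈ W := by
        rw [← lie_skew]
        exact W.neg_mem (hWinv a ha w' hw')
      exact part1 y hy _ this
    have hcase_p : ∀ w' ∈ W, ⁅y, ⁅w', b⁆⁆ = 0 := by
      intro w' hw'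
      rw [← hl₁W] at hw'
      induction hw' using Submodule.span_induction with
      | mem z hz =>
        obtain ⟨x, hx, v, hv, rfl⟩ := hz
        have hvW : ⁅x, v⁆ ∈ W := by
          rw [← hl₁W]
          exact Submodule.subset_span ⟨x, hx, v, hv, rfl⟩
        rw [lie_lie, lie_sub]
        -- second term vanishes
        have h2 : ⁅y, ⁅v, ⁅x, b⁆⁆⁆ = 0 := by
          rw [leibniz_lie, part1 y hy v hv, zero_lie, zero_add,
            hvanish x hx y hy b hb, lie_zero]
        -- first term: decompose ⁅v, b⁆
        have hc : ⁅v, b⁆ ∈ s ⊔ Q.orthogonal s := by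
          rw [hcompl.sup_eq_top]; trivial
        obtain ⟨c, hc1, d, hd1, hcd⟩ := Submodule.mem_sup.1 hc
        have h1 : ⁅y, ⁅x, ⁅v, b⁆⁆⁆ = ⁅y, ⁅x, c⁆⁆ := by
          rw [← hcd, lie_add, lie_add, hvanish x hx y hy d hd1, add_zero]
        -- the remaining piece lies in s and in s⊥, hence vanishes
        have hmem_s : ⁅y, ⁅x, c⁆⁆ ∈ s := hs y (hl₂s hy) _ (hs x (hl₁s hx) c hc1)
        have hmem_p : ⁅y, ⁅x, c⁆⁆ ∈ Q.orthogonal s := by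
          have := hperp y hy ⁅x, v⁆ hvW b
          rw [lie_lie, lie_sub, h2, sub_zero, h1] at this
          exact this
        have hz : ⁅y, ⁅x, c⁆⁆ = 0 := hQzero _ (hmem_p _ hmem_s)
        rw [h1, h2, hz, sub_zero]
      | zero => simp
      | add p q hp hq ihp ihq => rw [add_lie, lie_add, ihp, ihq, add_zero]
      | smul t p hp ihp => rw [smul_lie, lie_smul, ihp, smul_zero]
    rw [lie_add, lie_add, hcase_s w hw, hcase_p w hw, add_zero]
  constructor
  · rw [bracketSpan, Submodule.span_eq_bot]
    rintro z ⟨y, hy, w, hw, rfl⟩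
    exact part1 y hy w hw
  · rw [bracketSpan, Submodule.span_eq_bot]
    rintro z ⟨y, hy, t, ht, rfl⟩
    have hker : bracketSpan W ⊤ ≤ LinearMap.ker (LieAlgebra.ad ℝ g y) := by
      apply Submodule.span_le.2
      rintro z ⟨w, hw, u, _, rfl⟩
      simp only [SetLike.mem_coe, LinearMap.mem_ker, LieAlgebra.ad_apply]
      exact keyA y hy w hw u
    have := hker ht
    rwa [LinearMap.mem_ker, LieAlgebra.ad_apply] at this
end

section
/- Let g be a compact semisimple Lie algebra (so z(g) = 0) with a biinvariant inner product Q, equipped with an involutive Lie algebra automorphism τ whose +1-eigenspace is k, such that g has no proper nonzero τ-invariant ideal. Let s ⊊ g be a proper subalgebra, l₁, l₂ ⊆ s subalgebras with (ad_{l₂} ∘ ad_{l₁})|_{s⊥} = 0, and suppose there exists a nonzero ad_s-invariant and τ-invariant subspace W ⊆ s⊥ with [l₁, W] = W. Then l₂ = 0. -/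
lemma mem_bracketSpan {g : Type*} [LieRing g] [LieAlgebra ℝ g]
    {A B : Submodule ℝ g} {a b : g} (ha : a ∈ A) (hb : b ∈ B) :
    ⁅a, b⁆ ∈ bracketSpan A B :=
  Submodule.subset_span ⟨a, ha, b, hb, rfl⟩

lemma bracketSpan_le {g : Type*} [LieRing g] [LieAlgebra ℝ g]
    {A B C : Submodule ℝ g} (h : ∀ a ∈ A, ∀ b ∈ B, ⁅a, b⁆ ∈ C) :
    bracketSpan A B ≤ C := by
  apply Submodule.span_le.mpr
  rintro x ⟨a, ha, b, hb, rfl⟩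
  exact h a ha b hb

/-- Lemma 4.2 of the paper: let `g` be a compact semisimple Lie algebra (so `z(g) = 0`)
with a biinvariant inner product `Q` and an involution `τ` with `+1`-eigenspace `k`,
such that `g` has no proper nonzero `τ`-invariant ideal.  Let `s ⊊ g` be a proper
subalgebra, `l₁, l₂ ⊆ s` subalgebras with `(ad_{l₂} ∘ ad_{l₁})|_{s⊥} = 0`, and suppose
there is a nonzero `ad_s`- and `τ`-invariant subspace `W ⊆ s⊥` with `[l₁, W] = W`.
Then `l₂ = 0`. -/
theorem l2_eq_bot_of_composition_vanishes
    (g : Type*) [LieRing g] [LieAlgebra ℝ g] [FiniteDimensional ℝ g]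
    [LieAlgebra.IsSemisimple ℝ g]
    (hcenter : LieAlgebra.center ℝ g = ⊥)
    (Q : LinearMap.BilinForm ℝ g)
    (hsymm : ∀ x y : g, Q x y = Q y x)
    (hpos : ∀ x : g, x ≠ 0 → 0 < Q x x)
    (hbi : ∀ z x y : g, Q ⁅z, x⁆ y + Q x ⁅z, y⁆ = 0)
    (τ : g →ₗ⁅ℝ⁆ g)
    (hτinv : ∀ x : g, τ (τ x) = x)
    (k : Submodule ℝ g)
    (hk : ∀ x : g, τ x = x ↔ x ∈ k)
    (hirr : ∀ I : LieIdeal ℝ g, (∀ x ∈ I, τ x ∈ I) → I = ⊥ ∨ I = ⊤)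
    (s l₁ l₂ W : Submodule ℝ g)
    (hproper : s ≠ ⊤)
    (hs : ∀ x ∈ s, ∀ y ∈ s, ⁅x, y⁆ ∈ s)
    (hl₁s : l₁ ≤ s) (hl₂s : l₂ ≤ s)
    (hl₁ : ∀ x ∈ l₁, ∀ y ∈ l₁, ⁅x, y⁆ ∈ l₁)
    (hl₂ : ∀ x ∈ l₂, ∀ y ∈ l₂, ⁅x, y⁆ ∈ l₂)
    (hvanish : ∀ x ∈ l₁, ∀ y ∈ l₂, ∀ v ∈ Q.orthogonal s, ⁅y, ⁅x, v⁆⁆ = 0)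
    (hWne : W ≠ ⊥)
    (hWperp : W ≤ Q.orthogonal s)
    (hWinv : ∀ x ∈ s, ∀ w ∈ W, ⁅x, w⁆ ∈ W)
    (hWτ : ∀ w ∈ W, τ w ∈ W)
    (hl₁W : bracketSpan l₁ W = W) :
    l₂ = ⊥ := by
  classical
  set m : Submodule ℝ g := Q.orthogonal s with hmdef
  -- positivity: null vectors are zero
  have hQ0 : ∀ u : g, Q u u = 0 → u = 0 := by
    intro u h
    by_contra hu
    exact (hpos u hu).ne' h
  -- membership in m
  have hmemm : ∀ v : g, v ∈ m ↔ ∀ a ∈ s, Q a v = 0 := by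
    intro v; exact Iff.rfl
  -- s ∩ m = 0
  have hms0 : ∀ u : g, u ∈ s → u ∈ m → u = 0 := by
    intro u hus hum
    exact hQ0 u ((hmemm u).mp hum u hus)
  -- [s, m] ⊆ m
  have hsm : ∀ a ∈ s, ∀ v ∈ m, ⁅a, v⁆ ∈ m := by
    intro a ha v hv
    rw [hmemm]
    intro n hn
    have e1 := hbi a n v
    have e2 : Q ⁅a, n⁆ v = 0 := (hmemm v).mp hv _ (hs a ha n hn)
    linarith
  -- decomposition g = s ⊕ m
  have hrefl : Q.IsRefl := by
    intro x y h
    rw [hsymm y x]; exact h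
  have hrest : (Q.restrict s).Nondegenerate := by
    refine ⟨fun u hu => ?_, fun u hu => ?_⟩
    all_goals
      have h1 : Q (u : g) (u : g) = 0 := hu u
      have h2 : (u : g) = 0 := hQ0 _ h1
      exact Subtype.ext h2
  have hcompl : IsCompl s m :=
    Q.isCompl_orthogonal_of_restrict_nondegenerate hrefl hrest
  have hdec1 : ∀ d : g, ∃ a ∈ s, ∃ b ∈ m, d = a + b := by
    intro d
    have hd : d ∈ s ⊔ m := by rw [hcompl.sup_eq_top]; trivial
    obtain ⟨a, ha, b, hb, hab⟩ := Submodule.mem_sup.mp hd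
    exact ⟨a, ha, b, hb, hab.symm⟩
  -- (2') l₂ kills W
  have hzW : ∀ z ∈ l₂, ∀ w ∈ W, ⁅z, w⁆ = 0 := by
    intro z hz w hw
    rw [← hl₁W] at hw
    have hle : bracketSpan l₁ W ≤ LinearMap.ker (LieAlgebra.ad ℝ g z) := by
      apply bracketSpan_le
      intro x hx b hb
      rw [LinearMap.mem_ker, LieAlgebra.ad_apply]
      exact hvanish x hx z hz b (hWperp hb)
    have := hle hw
    rwa [LinearMap.mem_ker, LieAlgebra.ad_apply] at this
  -- (3') flipped vanishing : [l₁, [l₂, m]] = 0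
  have h3 : ∀ x ∈ l₁, ∀ z ∈ l₂, ∀ v ∈ m, ⁅x, ⁅z, v⁆⁆ = 0 := by
    intro x hx z hz v hv
    have hzv : ⁅z, v⁆ ∈ m := hsm z (hl₂s hz) v hv
    have hxi : ⁅x, ⁅z, v⁆⁆ ∈ m := hsm x (hl₁s hx) _ hzv
    have key : ∀ u ∈ m, Q u ⁅x, ⁅z, v⁆⁆ = 0 := by
      intro u hu
      have e1 := hbi x u ⁅z, v⁆
      have e2 := hbi z ⁅x, u⁆ v
      have e3 : ⁅z, ⁅x, u⁆⁆ = 0 := hvanish x hx z hz u hu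
      rw [e3] at e2
      simp only [map_zero, LinearMap.zero_apply, zero_add] at e2
      linarith
    exact hQ0 _ (key _ hxi)
  -- (8') [[l₂, m], W] ⊆ s
  have h8 : ∀ z ∈ l₂, ∀ v ∈ m, ∀ w ∈ W, ⁅⁅z, v⁆, w⁆ ∈ s := by
    intro z hz v hv w hw
    rw [← hl₁W] at hw
    have hle : bracketSpan l₁ W ≤
        Submodule.comap (LieAlgebra.ad ℝ g ⁅z, v⁆) s := by
      apply bracketSpan_le
      intro x hx w' hw'
      rw [Submodule.mem_comap, LieAlgebra.ad_apply]
      -- ⁅⁅z,v⁆, ⁅x,w'⁆⁆ = ⁅⁅⁅z,v⁆,x⁆,w'⁆ + ⁅x, ⁅⁅z,v⁆,w'⁆⁆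
      have hza : ⁅⁅z, v⁆, x⁆ = 0 := by
        have h := h3 x hx z hz v hv
        rw [← lie_skew, h, neg_zero]
      have hzw' : ⁅z, w'⁆ = 0 := hzW z hz w' hw'
      have e1 : ⁅⁅z, v⁆, w'⁆ = ⁅z, ⁅v, w'⁆⁆ := by
        rw [lie_lie, hzw', lie_zero, sub_zero]
      obtain ⟨a, ha, b, hb, hab⟩ := hdec1 ⁅v, w'⁆
      have key : ⁅⁅z, v⁆, ⁅x, w'⁆⁆ = ⁅x, ⁅z, a⁆⁆ := by
        rw [leibniz_lie, hza, zero_lie, zero_add, e1, hab, lie_add, lie_add,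
          h3 x hx z hz b hb, add_zero]
      rw [key]
      exact hs x (hl₁s hx) _ (hs z (hl₂s hz) a ha)
    have := hle hw
    rwa [Submodule.mem_comap, LieAlgebra.ad_apply] at this
  -- FACT D : [[l₂, m], W] = 0
  have hD : ∀ z ∈ l₂, ∀ v ∈ m, ∀ w ∈ W, ⁅⁅z, v⁆, w⁆ = 0 := by
    intro z hz v hv w hw
    set σ : g := ⁅⁅z, v⁆, w⁆ with hσ
    have hσs : σ ∈ s := h8 z hz v hv w hw
    have hσe : σ = ⁅z, ⁅v, w⁆⁆ := by
      rw [hσ, lie_lie, hzW z hz w hw, lie_zero, sub_zero]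
    obtain ⟨a, ha, b, hb, hab⟩ := hdec1 ⁅v, w⁆
    have hzb : ⁅z, b⁆ = 0 := by
      have h1 : ⁅z, b⁆ ∈ m := hsm z (hl₂s hz) b hb
      have h2 : ⁅z, b⁆ ∈ s := by
        have e : ⁅z, b⁆ = σ - ⁅z, a⁆ := by
          rw [hσe, hab, lie_add]; abel
        rw [e]
        exact Submodule.sub_mem s hσs (hs z (hl₂s hz) a ha)
      exact hms0 _ h2 h1
    have hσa : σ = ⁅z, a⁆ := by
      rw [hσe, hab, lie_add, hzb, add_zero]
    -- σ kills W
    have hσW : ∀ w'' ∈ W, ⁅σ, w''⁆ = 0 := by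
      intro w'' hw''
      rw [hσa, lie_lie, hzW z hz w'' hw'', hzW z hz _ (hWinv a ha w'' hw''),
        lie_zero, sub_zero]
    -- Q σ σ = 0
    have e2 := hbi σ ⁅z, v⁆ w
    rw [hσW w hw] at e2
    simp only [map_zero, add_zero] at e2
    have e1 := hbi ⁅z, v⁆ σ w
    rw [← hσ] at e1
    have e3 : Q ⁅⁅z, v⁆, σ⁆ w = 0 := by
      have hskew : ⁅⁅z, v⁆, σ⁆ = -⁅σ, ⁅z, v⁆⁆ := (lie_skew ⁅z, v⁆ σ).symm
      rw [hskew, map_neg, LinearMap.neg_apply, e2, neg_zero]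
    have : Q σ σ = 0 := by linarith
    exact hQ0 σ this
  -- cond-2 : [[z, d], w] = 0 for all d
  have hK0 : ∀ z ∈ l₂, ∀ d : g, ∀ w ∈ W, ⁅⁅z, d⁆, w⁆ = 0 := by
    intro z hz d w hw
    obtain ⟨a, ha, b, hb, rfl⟩ := hdec1 d
    have h1 : ⁅⁅z, a⁆, w⁆ = 0 := by
      rw [lie_lie, hzW z hz w hw, hzW z hz _ (hWinv a ha w hw), lie_zero,
        sub_zero]
    rw [lie_add, add_lie, h1, hD z hz b hb w hw, add_zero]
  -- DEC2 : m = ker (ad z)|_m ⊕ im (ad z)|_m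
  have hdec2 : ∀ z ∈ l₂, ∀ v ∈ m,
      ∃ v0 ∈ m, ∃ u ∈ m, ⁅z, v0⁆ = 0 ∧ v = v0 + ⁅z, u⁆ := by
    intro z hz v hv
    have hmap : ∀ x ∈ m, (LieAlgebra.ad ℝ g z) x ∈ m := by
      intro x hx
      rw [LieAlgebra.ad_apply]
      exact hsm z (hl₂s hz) x hx
    set A : ↥m →ₗ[ℝ] ↥m := (LieAlgebra.ad ℝ g z).restrict hmap with hA
    have hAapp : ∀ x : ↥m, ((A x : g)) = ⁅z, (x : g)⁆ := by
      intro x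
      rw [hA, LinearMap.restrict_coe_apply, LieAlgebra.ad_apply]
    have hinf : LinearMap.ker A ⊓ LinearMap.range A = ⊥ := by
      rw [eq_bot_iff]
      rintro x ⟨hxk, hxr⟩
      obtain ⟨u, hu⟩ := hxr
      have hx0 : ⁅z, (x : g)⁆ = 0 := by
        have := congrArg (Subtype.val) (LinearMap.mem_ker.mp hxk)
        rwa [hAapp] at this
      have hux : ⁅z, (u : g)⁆ = (x : g) := by
        have := congrArg (Subtype.val) hu
        rwa [hAapp] at this
      have hQx : Q (x : g) (x : g) = 0 := by
        have e := hbi z (u : g) (x : g)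
        rw [hux, hx0] at e
        simp only [map_zero, add_zero] at e
        exact e
      have : (x : g) = 0 := hQ0 _ hQx
      simpa [Submodule.mem_bot] using Subtype.ext this
    have hsup : LinearMap.ker A ⊔ LinearMap.range A = ⊤ := by
      apply Submodule.eq_top_of_finrank_eq
      have h1 := Submodule.finrank_sup_add_finrank_inf_eq
        (LinearMap.ker A) (LinearMap.range A)
      rw [hinf, finrank_bot, add_zero] at h1
      have h2 := LinearMap.finrank_range_add_finrank_ker A
      omega
    have hvmem : (⟨v, hv⟩ : ↥m) ∈ LinearMap.ker A ⊔ LinearMap.range A := by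
      rw [hsup]; trivial
    obtain ⟨y, hy, r, hr, hyr⟩ := Submodule.mem_sup.mp hvmem
    obtain ⟨u, hu⟩ := hr
    refine ⟨(y : g), y.2, (u : g), u.2, ?_, ?_⟩
    · have := congrArg (Subtype.val) (LinearMap.mem_ker.mp hy)
      rwa [hAapp] at this
    · have := congrArg (Subtype.val) hyr
      rw [Submodule.coe_add] at this
      have hru : (r : g) = ⁅z, (u : g)⁆ := by
        have h := congrArg (Subtype.val) hu
        rw [hAapp] at h
        exact h.symm
      rw [hru] at this
      exact this.symm
  -- main argument: fix z ∈ l₂ and show z = 0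
  rw [Submodule.eq_bot_iff]
  intro z hz
  -- the subspace D of elements killed by z and by all [z, d]
  set D : Submodule ℝ g :=
    { carrier := {t | ⁅z, t⁆ = 0 ∧ ∀ d : g, ⁅⁅z, d⁆, t⁆ = 0}
      add_mem' := by
        rintro a b ⟨ha1, ha2⟩ ⟨hb1, hb2⟩
        refine ⟨by rw [lie_add, ha1, hb1, add_zero], fun d => ?_⟩
        rw [lie_add, ha2 d, hb2 d, add_zero]
      zero_mem' := ⟨lie_zero z, fun d => lie_zero _⟩
      smul_mem' := by
        rintro c x ⟨h1, h2⟩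
        refine ⟨by rw [lie_smul, h1, smul_zero], fun d => ?_⟩
        rw [lie_smul, h2 d, smul_zero] } with hDdef
  have hDmem : ∀ t : g, t ∈ D ↔ (⁅z, t⁆ = 0 ∧ ∀ d : g, ⁅⁅z, d⁆, t⁆ = 0) := by
    intro t; exact Iff.rfl
  -- W ⊆ D
  have hWD : W ≤ D := by
    intro w hw
    exact ⟨hzW z hz w hw, fun d => hK0 z hz d w hw⟩
  -- [m, D] ⊆ D
  have hstep : ∀ v ∈ m, ∀ t ∈ D, ⁅v, t⁆ ∈ D := by
    intro v hv t ht
    obtain ⟨ht1, ht2⟩ := (hDmem t).mp ht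
    obtain ⟨v0, hv0m, u, hum, hv0z, rfl⟩ := hdec2 z hz v hv
    rw [add_lie, ht2 u, add_zero]
    rw [hDmem]
    constructor
    · rw [leibniz_lie, hv0z, zero_lie, ht1, lie_zero, add_zero]
    · intro d
      rw [leibniz_lie, ht2 d, lie_zero, add_zero]
      have e : ⁅⁅z, d⁆, v0⁆ = ⁅z, ⁅d, v0⁆⁆ := by
        rw [lie_lie, hv0z, lie_zero, sub_zero]
      rw [e]
      exact ht2 ⁅d, v0⁆
  -- the ascending chain of submodules generated by W under ad m
  set T : ℕ → Submodule ℝ g :=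
    fun n => Nat.rec W (fun _ Tk => Tk ⊔ bracketSpan m Tk) n with hTdef
  have hT0 : T 0 = W := rfl
  have hTsucc : ∀ n, T (n + 1) = T n ⊔ bracketSpan m (T n) := fun n => rfl
  have hTmono : Monotone T := by
    apply monotone_nat_of_le_succ
    intro n
    rw [hTsucc]
    exact le_sup_left
  -- each T n is ad s - invariant
  have hTs : ∀ n, ∀ a ∈ s, ∀ t ∈ T n, ⁅a, t⁆ ∈ T n := by
    intro n
    induction n with
    | zero => intro a ha t ht; exact hWinv a ha t ht
    | succ n ih =>
      intro a ha t ht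
      rw [hTsucc] at ht ⊢
      obtain ⟨t1, ht1, t2, ht2, rfl⟩ := Submodule.mem_sup.mp ht
      rw [lie_add]
      apply Submodule.add_mem
      · exact Submodule.mem_sup_left (ih a ha t1 ht1)
      · apply Submodule.mem_sup_right
        have hle : bracketSpan m (T n) ≤
            Submodule.comap (LieAlgebra.ad ℝ g a) (bracketSpan m (T n)) := by
          apply bracketSpan_le
          intro vv hvv tt htt
          rw [Submodule.mem_comap, LieAlgebra.ad_apply, leibniz_lie]
          apply Submodule.add_mem
          · exact mem_bracketSpan (hsm a ha vv hvv) htt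
          · exact mem_bracketSpan hvv (ih a ha tt htt)
        have := hle ht2
        rwa [Submodule.mem_comap, LieAlgebra.ad_apply] at this
  -- each T n is contained in D
  have hTD : ∀ n, T n ≤ D := by
    intro n
    induction n with
    | zero => exact hWD
    | succ n ih =>
      rw [hTsucc]
      apply sup_le ih
      apply bracketSpan_le
      intro v hv t ht
      exact hstep v hv t (ih ht)
  -- the union of the T n is an ideal
  set Tinf : Submodule ℝ g := ⨆ n, T n with hTinfdef
  have hmemTinf : ∀ x : g, x ∈ Tinf ↔ ∃ n, x ∈ T n := by
    intro x
    exact Submodule.mem_iSup_of_directed T hTmono.directed_le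
  have hTinfD : Tinf ≤ D := by
    intro x hx
    obtain ⟨n, hn⟩ := (hmemTinf x).mp hx
    exact hTD n hn
  set I : LieIdeal ℝ g :=
    { toSubmodule := Tinf
      lie_mem := by
        intro e t ht
        have ht' : t ∈ Tinf := ht
        obtain ⟨n, hn⟩ := (hmemTinf t).mp ht'
        obtain ⟨a, ha, b, hb, rfl⟩ := hdec1 e
        show ⁅a + b, t⁆ ∈ Tinf
        rw [add_lie]
        apply Submodule.add_mem
        · exact (le_iSup T n) (hTs n a ha t hn)
        · refine (le_iSup T (n + 1)) ?_
          rw [hTsucc]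
          exact Submodule.mem_sup_right (mem_bracketSpan hb hn) } with hIdef
  have hWI : (W : Set g) ⊆ I := by
    intro w hw
    show w ∈ Tinf
    exact (le_iSup T 0) hw
  -- the Lie ideal generated by W
  set J : LieIdeal ℝ g := LieSubmodule.lieSpan ℝ g (W : Set g) with hJdef
  have hWJ : (W : Set g) ⊆ J := LieSubmodule.subset_lieSpan
  -- J is τ-invariant
  have hJτ : ∀ x ∈ J, τ x ∈ J := by
    set K : LieIdeal ℝ g :=
      { toSubmodule := Submodule.comap (τ : g →ₗ[ℝ] g) (J : Submodule ℝ g)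
        lie_mem := by
          intro e x hx
          have hx' : τ x ∈ J := hx
          show τ ⁅e, x⁆ ∈ (J : Submodule ℝ g)
          rw [LieHom.map_lie]
          exact J.lie_mem hx' } with hKdef
    have hWK : (W : Set g) ⊆ K := by
      intro w hw
      show τ w ∈ (J : Submodule ℝ g)
      exact hWJ (hWτ w hw)
    have hJK : J ≤ K := (LieSubmodule.lieSpan_le).mpr hWK
    intro x hx
    exact hJK hx
  -- J = ⊤
  have hJtop : J = ⊤ := by
    rcases hirr J hJτ with hbot | htop
    · exfalso
      obtain ⟨w, hw, hwne⟩ := (Submodule.ne_bot_iff W).mp hWne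
      have : w ∈ J := hWJ hw
      rw [hbot] at this
      exact hwne ((LieSubmodule.mem_bot _).mp this)
    · exact htop
  -- J ≤ I, hence I = ⊤, hence everything is in D
  have hJI : J ≤ I := (LieSubmodule.lieSpan_le).mpr hWI
  have hallD : ∀ t : g, t ∈ D := by
    intro t
    have : t ∈ J := by rw [hJtop]; trivial
    exact hTinfD (hJI this)
  -- z is central
  have hzc : z ∈ LieAlgebra.center ℝ g := by
    rw [LieModule.mem_maxTrivSubmodule]
    intro x
    have h1 : ⁅z, x⁆ = 0 := (hallD x).1
    rw [← lie_skew, h1, neg_zero]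
  rw [hcenter] at hzc
  exact (LieSubmodule.mem_bot _).mp hzc
end

section
/- Let g be a Lie algebra with a biinvariant inner product Q, let h, k ⊆ g be subalgebras, let H := h⊥ ∩ k⊥, and let v₀ ∈ H satisfy [v₀, H] = 0. Define ω(x,y) := Q(v₀, [x,y]) on g. Then both V₁ := pr_{s⊥}(h) and V₂ := pr_{s⊥}(k) are isotropic for ω restricted to s⊥, where s := centralizer of v₀; concretely: Q(v₀, [x₁, x₂]) = 0 for all x₁, x₂ ∈ pr_{s⊥}(h), and similarly for pr_{s⊥}(k). -/
/-- Lemma 4.3.1 of the paper: let `g` be a finite-dimensional real Lie algebra with a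
biinvariant inner product `Q`, `h, k ⊆ g` subalgebras, `H := h⊥ ∩ k⊥` and `v₀ ∈ H` with
`[v₀, H] = 0` and `Q(v₀, [h, h]) = 0 = Q(v₀, [k, k])`.  Let `s` be the centralizer of `v₀`.
Then both projections `pr_{s⊥}(h)` and `pr_{s⊥}(k)` are isotropic for the form
`ω(x, y) := Q(v₀, [x, y])`: concretely, for `x₁, x₂ ∈ s⊥` with `xᵢ + kᵢ ∈ h` for some
`kᵢ ∈ s` we have `Q(v₀, [x₁, x₂]) = 0`, and similarly for `k`. -/
theorem projections_isotropic
    (g : Type*) [LieRing g] [LieAlgebra ℝ g] [FiniteDimensional ℝ g]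
    (Q : LinearMap.BilinForm ℝ g)
    (hsymm : ∀ x y : g, Q x y = Q y x)
    (hpos : ∀ x : g, x ≠ 0 → 0 < Q x x)
    (hbi : ∀ z x y : g, Q ⁅z, x⁆ y + Q x ⁅z, y⁆ = 0)
    (h k : Submodule ℝ g)
    (hh : ∀ x ∈ h, ∀ y ∈ h, ⁅x, y⁆ ∈ h)
    (hk : ∀ x ∈ k, ∀ y ∈ k, ⁅x, y⁆ ∈ k)
    (v₀ : g)
    (hv₀H : v₀ ∈ Q.orthogonal h ⊓ Q.orthogonal k)
    (hv₀comm : ∀ w ∈ Q.orthogonal h ⊓ Q.orthogonal k, ⁅v₀, w⁆ = 0)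
    (hv₀h : ∀ a ∈ h, ∀ b ∈ h, Q v₀ ⁅a, b⁆ = 0)
    (hv₀k : ∀ a ∈ k, ∀ b ∈ k, Q v₀ ⁅a, b⁆ = 0)
    (s : Submodule ℝ g)
    (hs : s = LinearMap.ker (LieAlgebra.ad ℝ g v₀)) :
    (∀ x₁ ∈ Q.orthogonal s, ∀ x₂ ∈ Q.orthogonal s,
      (∃ k₁ ∈ s, x₁ + k₁ ∈ h) → (∃ k₂ ∈ s, x₂ + k₂ ∈ h) → Q v₀ ⁅x₁, x₂⁆ = 0) ∧
    (∀ x₁ ∈ Q.orthogonal s, ∀ x₂ ∈ Q.orthogonal s,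
      (∃ k₁ ∈ s, x₁ + k₁ ∈ k) → (∃ k₂ ∈ s, x₂ + k₂ ∈ k) → Q v₀ ⁅x₁, x₂⁆ = 0) := by

  have key : ∀ c ∈ s, ∀ y : g, Q v₀ ⁅c, y⁆ = 0 := by
    intro c hc y
    have hc0 : ⁅v₀, c⁆ = 0 := by
      rw [hs] at hc
      simpa [LieAlgebra.ad_apply] using hc
    have hcv : ⁅c, v₀⁆ = 0 := by rw [← lie_skew, hc0, neg_zero]
    have := hbi c v₀ y
    rw [hcv] at this
    simpa using this
  have main : ∀ (m : Submodule ℝ g), (∀ a ∈ m, ∀ b ∈ m, Q v₀ ⁅a, b⁆ = 0) →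
      ∀ x₁ ∈ Q.orthogonal s, ∀ x₂ ∈ Q.orthogonal s,
      (∃ k₁ ∈ s, x₁ + k₁ ∈ m) → (∃ k₂ ∈ s, x₂ + k₂ ∈ m) → Q v₀ ⁅x₁, x₂⁆ = 0 := by
    intro m hm x₁ _ x₂ _ ⟨k₁, hk₁, hm₁⟩ ⟨k₂, hk₂, hm₂⟩
    have h1 : Q v₀ ⁅k₁, x₂ + k₂⁆ = 0 := key k₁ hk₁ _
    have h2 : Q v₀ ⁅x₁, k₂⁆ = 0 := by
      rw [← lie_skew, map_neg, key k₂ hk₂ x₁, neg_zero]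
    have h0 : Q v₀ ⁅x₁ + k₁, x₂ + k₂⁆ = 0 := hm _ hm₁ _ hm₂
    rw [add_lie, map_add, h1, add_zero, lie_add, map_add, h2, add_zero] at h0
    exact h0
  exact ⟨main h hv₀h, main k hv₀k⟩
end

section
/- Let V₂ be a finite-dimensional real inner product space, P₀ : V₂ → V₂ symmetric positive definite, φ : V₂ → V₂ symmetric, and A : V₂ → V₂ symmetric with [A, P₀] = 0. Work in V := V₂ ⊗ ℂ with J = multiplication by i, and set V₁ := {Jx + P₀⁻¹φx : x ∈ V₂}. If ⟨JA u, w⟩ = 0 for all u, w ∈ V₁, then [P₀⁻¹A, φ] = 0. -/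
open RealInnerProductSpace

/-- Lemma 4.5.1 of the paper: in `V = V₂ ⊗ ℂ` (modelled as `V = V₂ ⊕ J V₂` with `J` the
complex structure of multiplication by `i`), let `P₀` be symmetric positive definite,
`φ` symmetric and `A` symmetric with `[A, P₀] = 0`, all commuting with `J` and preserving
`V₂`, and `Q₀ = P₀⁻¹`.  If `V₁ := {Jx + P₀⁻¹ φ x : x ∈ V₂}` satisfies
`⟪J A u, w⟫ = 0` for all `u, w ∈ V₁`, then `[P₀⁻¹ A, φ] = 0`. -/
theorem commutator_P0inv_A_phi_eq_zero
    (V : Type*) [NormedAddCommGroup V] [InnerProductSpace ℝ V] [FiniteDimensional ℝ V]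
    (V₂ : Submodule ℝ V)
    (J P₀ Q₀ φ A : V →ₗ[ℝ] V)
    (hJorth : ∀ x y : V, ⟪J x, J y⟫ = ⟪x, y⟫)
    (hJsq : ∀ x : V, J (J x) = -x)
    (hJV₂ : Submodule.map J V₂ = V₂ᗮ)
    (hPsymm : ∀ x y : V, ⟪P₀ x, y⟫ = ⟪x, P₀ y⟫)
    (hPpos : ∀ x : V, x ≠ 0 → 0 < ⟪P₀ x, x⟫)
    (hJP : J ∘ₗ P₀ = P₀ ∘ₗ J)
    (hPV₂ : ∀ x ∈ V₂, P₀ x ∈ V₂)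
    (hQ₀P₀ : Q₀ ∘ₗ P₀ = LinearMap.id) (hP₀Q₀ : P₀ ∘ₗ Q₀ = LinearMap.id)
    (hφsymm : ∀ x y : V, ⟪φ x, y⟫ = ⟪x, φ y⟫)
    (hφJ : J ∘ₗ φ = φ ∘ₗ J)
    (hφV₂ : ∀ x ∈ V₂, φ x ∈ V₂)
    (hAsymm : ∀ x y : V, ⟪A x, y⟫ = ⟪x, A y⟫)
    (hAJ : J ∘ₗ A = A ∘ₗ J)
    (hAV₂ : ∀ x ∈ V₂, A x ∈ V₂)
    (hAP₀ : A ∘ₗ P₀ = P₀ ∘ₗ A)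
    (hiso : ∀ x ∈ V₂, ∀ y ∈ V₂,
      ⟪J (A (J x + Q₀ (φ x))), J y + Q₀ (φ y)⟫ = 0) :
    (Q₀ ∘ₗ A) ∘ₗ φ = φ ∘ₗ (Q₀ ∘ₗ A) := by
  -- pointwise versions of inverse identities
  have hPQ : ∀ x : V, P₀ (Q₀ x) = x := fun x => LinearMap.congr_fun hP₀Q₀ x
  have hQP : ∀ x : V, Q₀ (P₀ x) = x := fun x => LinearMap.congr_fun hQ₀P₀ x
  have hAP : ∀ x : V, A (P₀ x) = P₀ (A x) := fun x => LinearMap.congr_fun hAP₀ x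
  have hJA : ∀ x : V, J (A x) = A (J x) := fun x => LinearMap.congr_fun hAJ x
  have hJφ : ∀ x : V, J (φ x) = φ (J x) := fun x => LinearMap.congr_fun hφJ x
  have hJPp : ∀ x : V, J (P₀ x) = P₀ (J x) := fun x => LinearMap.congr_fun hJP x
  -- Q₀ symmetric
  have hQsymm : ∀ x y : V, ⟪Q₀ x, y⟫ = ⟪x, Q₀ y⟫ := by
    intro x y
    calc ⟪Q₀ x, y⟫ = ⟪Q₀ x, P₀ (Q₀ y)⟫ := by rw [hPQ]
    _ = ⟪P₀ (Q₀ x), Q₀ y⟫ := (hPsymm _ _).symm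
    _ = ⟪x, Q₀ y⟫ := by rw [hPQ]
  -- Q₀ commutes with A and with J
  have hQA : ∀ x : V, Q₀ (A x) = A (Q₀ x) := by
    intro x
    calc Q₀ (A x) = Q₀ (A (P₀ (Q₀ x))) := by rw [hPQ]
    _ = Q₀ (P₀ (A (Q₀ x))) := by rw [hAP]
    _ = A (Q₀ x) := hQP _
  have hJQ : ∀ x : V, J (Q₀ x) = Q₀ (J x) := by
    intro x
    calc J (Q₀ x) = Q₀ (P₀ (J (Q₀ x))) := (hQP _).symm
    _ = Q₀ (J (P₀ (Q₀ x))) := by rw [hJPp]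
    _ = Q₀ (J x) := by rw [hPQ]
  -- Q₀ preserves V₂
  have hQV₂ : ∀ x ∈ V₂, Q₀ x ∈ V₂ := by
    intro x hx
    have hinj : Function.Injective (P₀.restrict hPV₂) := by
      intro a b hab
      have : P₀ (a : V) = P₀ (b : V) := congrArg Subtype.val hab
      have := congrArg Q₀ this
      rw [hQP, hQP] at this
      exact Subtype.ext this
    have hsurj : Function.Surjective (P₀.restrict hPV₂) :=
      (LinearMap.injective_iff_surjective).mp hinj
    obtain ⟨y, hy⟩ := hsurj ⟨x, hx⟩
    have hyx : P₀ (y : V) = x := congrArg Subtype.val hy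
    have : Q₀ x = (y : V) := by rw [← hyx, hQP]
    rw [this]; exact y.2
  -- orthogonality of V₂ and J V₂
  have horth : ∀ a ∈ V₂, ∀ b ∈ V₂, ⟪a, J b⟫ = 0 := by
    intro a ha b hb
    have hJb : J b ∈ V₂ᗮ := by
      rw [← hJV₂]; exact Submodule.mem_map_of_mem hb
    exact (Submodule.mem_orthogonal V₂ (J b)).mp hJb a ha
  -- the main identity on V₂
  have key : ∀ x ∈ V₂, Q₀ (A (φ x)) = φ (Q₀ (A x)) := by
    intro x hx
    have hmem : Q₀ (A (φ x)) - φ (Q₀ (A x)) ∈ V₂ := by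
      apply Submodule.sub_mem
      · exact hQV₂ _ (hAV₂ _ (hφV₂ _ hx))
      · exact hφV₂ _ (hQV₂ _ (hAV₂ _ hx))
    have hzero : ∀ y ∈ V₂, ⟪Q₀ (A (φ x)) - φ (Q₀ (A x)), y⟫ = 0 := by
      intro y hy
      have h0 := hiso x hx y hy
      have hexp : J (A (J x + Q₀ (φ x))) = -(A x) + J (Q₀ (A (φ x))) := by
        rw [map_add, map_add, hJA, hJA, hJsq, map_neg, hQA, ← hJA, ← hQA]
      rw [hexp] at h0
      rw [inner_add_left, inner_add_right, inner_add_right, inner_neg_left,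
        inner_neg_left] at h0
      have t1 : ⟪A x, J y⟫ = 0 := horth _ (hAV₂ _ hx) _ hy
      have t4 : ⟪J (Q₀ (A (φ x))), Q₀ (φ y)⟫ = 0 := by
        rw [real_inner_comm]
        exact horth _ (hQV₂ _ (hφV₂ _ hy)) _ (hQV₂ _ (hAV₂ _ (hφV₂ _ hx)))
      have t3 : ⟪J (Q₀ (A (φ x))), J y⟫ = ⟪Q₀ (A (φ x)), y⟫ := hJorth _ _
      have t2 : ⟪A x, Q₀ (φ y)⟫ = ⟪φ (Q₀ (A x)), y⟫ := by
        calc ⟪A x, Q₀ (φ y)⟫ = ⟪Q₀ (A x), φ y⟫ := (hQsymm _ _).symm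
        _ = ⟪φ y, Q₀ (A x)⟫ := real_inner_comm _ _
        _ = ⟪y, φ (Q₀ (A x))⟫ := hφsymm _ _
        _ = ⟪φ (Q₀ (A x)), y⟫ := real_inner_comm _ _
      rw [t1, t2, t3, t4] at h0
      rw [inner_sub_left]
      linarith
    have := hzero _ hmem
    have := inner_self_eq_zero.mp this
    exact sub_eq_zero.mp this
  -- extend to all of V
  ext v
  obtain ⟨a, ha, b, hb, hv⟩ := V₂.exists_add_mem_mem_orthogonal v
  rw [← hJV₂] at hb
  obtain ⟨c, hc, rfl⟩ := hb
  simp only [LinearMap.comp_apply, hv, map_add]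
  have h1 : Q₀ (A (φ a)) = φ (Q₀ (A a)) := key a ha
  have h2 : Q₀ (A (φ (J c))) = φ (Q₀ (A (J c))) := by
    rw [← hJφ, ← hJA, ← hJQ, key c hc, hJφ, hJQ, hJA]
  rw [h1, h2]
end

section
/- Let V₂ be a real inner product space, P₀ symmetric positive definite on V₂, φ symmetric on V₂, k a skew-symmetric operator on V₂, and x ∈ V₂ a nonzero vector with φ x = ν x for some ν ∈ ℝ. If ν·kx - φ(kx) = μ(P₀² + ν²)x for some μ ∈ ℝ, then μ = 0. -/
open RealInnerProductSpace

/-- The key computation of Lemma 4.5.2: let `P₀` be symmetric positive definite, `φ`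
symmetric, `k` skew-symmetric on a real inner product space `V₂`, and `x ≠ 0` with
`φ x = ν x`.  If `ν·kx - φ(kx) = μ(P₀² + ν²)x` for some `μ ∈ ℝ`, then `μ = 0`. -/
theorem mu_eq_zero
    (V₂ : Type*) [NormedAddCommGroup V₂] [InnerProductSpace ℝ V₂] [FiniteDimensional ℝ V₂]
    (P₀ φ k : V₂ →ₗ[ℝ] V₂)
    (hPsymm : ∀ x y : V₂, ⟪P₀ x, y⟫ = ⟪x, P₀ y⟫)
    (hPpos : ∀ x : V₂, x ≠ 0 → 0 < ⟪P₀ x, x⟫)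
    (hφsymm : ∀ x y : V₂, ⟪φ x, y⟫ = ⟪x, φ y⟫)
    (hkskew : ∀ x y : V₂, ⟪k x, y⟫ = -⟪x, k y⟫)
    (x : V₂) (hx : x ≠ 0)
    (ν μ : ℝ)
    (hνx : φ x = ν • x)
    (heq : ν • k x - φ (k x) = μ • (P₀ (P₀ x) + (ν ^ 2) • x)) :
    μ = 0 := by
  have hPx : P₀ x ≠ 0 := by
    intro h
    have := hPpos x hx
    rw [h, inner_zero_left] at this
    exact lt_irrefl _ this
  have hpair := congrArg (fun v => ⟪v, x⟫) heq
  simp only [inner_sub_left, inner_smul_left, inner_add_left] at hpair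
  have h1 : ⟪φ (k x), x⟫ = ν * ⟪k x, x⟫ := by
    rw [hφsymm, hνx, real_inner_smul_right, real_inner_comm]
  have h2 : ⟪P₀ (P₀ x), x⟫ = ‖P₀ x‖ ^ 2 := by
    rw [hPsymm, real_inner_self_eq_norm_sq]
  simp only [starRingEnd_apply, star_trivial, h1, h2, real_inner_self_eq_norm_sq] at hpair
  have hpos : 0 < ‖P₀ x‖ ^ 2 + ν ^ 2 * ‖x‖ ^ 2 := by
    have := sq_pos_of_ne_zero (norm_ne_zero_iff.mpr hPx)
    nlinarith [sq_nonneg ν, sq_nonneg ‖x‖]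
  have h0 : μ * (‖P₀ x‖ ^ 2 + ν ^ 2 * ‖x‖ ^ 2) = 0 := by linarith
  rcases mul_eq_zero.mp h0 with h | h
  · exact h
  · exact absurd h (ne_of_gt hpos)
end
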